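/- Suppose there exists a ∈ F_q such that N := |{(x,y) ∈ F_q × F_q : y^p − y = x(R(x) + a x)}| satisfies (N − q)² = (p−1)²·p^{2e}·q (i.e. the curve y^p − y = x(R(x)+ax) is F_q-extremal). Then every u ∈ 𝔽 with R(u) + R*(u) = 0 lies in F_q. -/

import Mathlib

open Finset

open scoped Classical

noncomputable section

/-- Length-two Witt vectors, with the operations specialised to characteristic two. -/
def W2 (R : Type*) := R × R

namespace W2

variable {R : Type*} [CommRing R]

instance : Zero (W2 R) := ⟨((0, 0) : R × R)⟩

instance : Add (W2 R) := ⟨fun x y => ((x.1 + y.1, x.2 + y.2 + x.1 * y.1) : R × R)⟩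

instance [CharP R 2] : Neg (W2 R) := ⟨fun x => ((x.1, x.2 + x.1 * x.1) : R × R)⟩

theorem fst_add (x y : W2 R) : (x + y).1 = x.1 + y.1 := rfl
theorem snd_add (x y : W2 R) : (x + y).2 = x.2 + y.2 + x.1 * y.1 := rfl
theorem fst_zero : (0 : W2 R).1 = 0 := rfl
theorem snd_zero : (0 : W2 R).2 = 0 := rfl
theorem fst_neg [CharP R 2] (x : W2 R) : (-x).1 = x.1 := rfl
theorem snd_neg [CharP R 2] (x : W2 R) : (-x).2 = x.2 + x.1 * x.1 := rfl

instance [CharP R 2] : AddCommGroup (W2 R) where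
  add := (· + ·)
  zero := 0
  neg := Neg.neg
  add_assoc a b c := Prod.ext_iff.mpr (by
    constructor <;> simp only [fst_add, snd_add] <;> ring)
  zero_add a := Prod.ext_iff.mpr (by
    constructor <;> simp [fst_add, snd_add, fst_zero, snd_zero])
  add_zero a := Prod.ext_iff.mpr (by
    constructor <;> simp [fst_add, snd_add, fst_zero, snd_zero])
  add_comm a b := Prod.ext_iff.mpr (by
    constructor <;> simp only [fst_add, snd_add] <;> ring)
  neg_add_cancel a := Prod.ext_iff.mpr (by
    constructor
    · simp only [fst_add, fst_neg, fst_zero]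
      exact CharTwo.add_self_eq_zero a.1
    · simp only [snd_add, snd_neg, snd_zero, fst_neg]
      rw [show a.2 + a.1 * a.1 + a.2 + a.1 * a.1
            = (a.2 + a.2) + (a.1 * a.1 + a.1 * a.1) by ring]
      rw [CharTwo.add_self_eq_zero, CharTwo.add_self_eq_zero, add_zero])
  nsmul := nsmulRec
  zsmul := zsmulRec

/-- Frobenius on length-two Witt vectors (characteristic two). -/
def frob (x : W2 R) : W2 R := ((x.1 ^ 2, x.2 ^ 2) : R × R)

/-- The Witt-vector trace `Tr_{q/2} = ∑_{i=0}^{n-1} Frobⁱ`. -/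
def tr [CharP R 2] (n : ℕ) (x : W2 R) : W2 R := ∑ i ∈ Finset.range n, frob^[i] x

/-- The additive character of `W₂(𝔽₂)` determined by `ξ₂(1,0) = I`
(for `I` a fixed primitive fourth root of unity), evaluated on Witt vectors
whose components lie in the prime field `𝔽₂ = {0,1}`. -/
def xi (I : ℂ) (x : W2 R) : ℂ := (if x.1 = 0 then 1 else I) * (if x.2 = 0 then 1 else -1)

end W2

variable {K : Type*}

/-- The absolute trace `Tr_{q/2} : 𝔽_q → 𝔽₂`, computed inside `K` (here `q = 2^n`). -/
def tr2 [Field K] (n : ℕ) (x : K) : K := ∑ i ∈ Finset.range n, x ^ 2 ^ i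

/-- The relative trace `Tr_{q/p} : 𝔽_q → 𝔽_p ⊆ 𝔽_q`, computed inside `K`
(here `q = p^m`). -/
def trp [Field K] (p m : ℕ) (x : K) : K := ∑ i ∈ Finset.range m, x ^ p ^ i

/-- The character `ψ_q(x) = (-1)^{Tr_{q/2}(x)}`. -/
def psiq [Field K] (n : ℕ) (x : K) : ℂ := if tr2 n x = 0 then 1 else -1

/-- The map `Q_q(x) = ξ₂(Tr_{q/2}(x,0))` on Witt vectors of length two. -/
def Qq [Field K] [CharP K 2] (I : ℂ) (n : ℕ) (x : K) : ℂ :=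
  W2.xi I (W2.tr n (((x, 0) : K × K) : W2 K))

/-- The unique `2^j`-th root in a perfect field of characteristic two. -/
def rt (L : Type*) [Field L] [ExpChar L 2] [PerfectRing L 2] (j : ℕ) (x : L) : L :=
  (fun y => (frobeniusEquiv L 2).symm y)^[j] x

/-- Evaluation of the `𝔽_p`-linearised polynomial `∑_{i=0}^{e} c_i x^{p^i}`. -/
def Lpoly [Field K] (p e : ℕ) (c : ℕ → K) (x : K) : K :=
  ∑ i ∈ Finset.range (e + 1), c i * x ^ p ^ i

/-- The adjoint `f^*(x) = ∑_{i=0}^{e} (c_i x)^{p^{-i}}` (with `p = 2^k`). -/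
def adj [Field K] [ExpChar K 2] [PerfectRing K 2] (k e : ℕ) (c : ℕ → K) (x : K) : K :=
  ∑ i ∈ Finset.range (e + 1), rt K (k * i) (c i * x)

/-- Evaluation of the `𝔽_p`-linearised polynomial `∑_{i=1}^{e} c_i x^{p^i}`
(no constant-in-`x` coefficient). -/
def LpolyIcc [Field K] (p e : ℕ) (c : ℕ → K) (x : K) : K :=
  ∑ i ∈ Finset.Icc 1 e, c i * x ^ p ^ i

/-- The adjoint `R^*(x) = ∑_{i=1}^{e} (c_i x)^{p^{-i}}` (with `p = 2^k`). -/
def adjIcc [Field K] [ExpChar K 2] [PerfectRing K 2] (k e : ℕ) (c : ℕ → K) (x : K) : K :=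
  ∑ i ∈ Finset.Icc 1 e, rt K (k * i) (c i * x)

/-- The coefficients `a_i = ∑_{j=0}^{e-i} (b_j b_{j+i})^{p^{-j}}` of `R_F` (with `p = 2^k`). -/
def aRF [Field K] [ExpChar K 2] [PerfectRing K 2] (k e : ℕ) (b : ℕ → K) (i : ℕ) : K :=
  ∑ j ∈ Finset.range (e - i + 1), rt K (k * j) (b j * b (j + i))

/-- The linearised polynomial `R_F(x) = ∑_{i=1}^{e} a_i x^{p^i}` (with `p = 2^k`). -/
def RF [Field K] [ExpChar K 2] [PerfectRing K 2] (k e : ℕ) (b : ℕ → K) (x : K) : K :=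
  ∑ i ∈ Finset.Icc 1 e, aRF k e b i * x ^ (2 ^ k) ^ i

/-- `γ_F = ∑_{0 ≤ i < j ≤ e} b_i^{p^{-i}} b_j^{p^{-j}}` (with `p = 2^k`). -/
def gammaF [Field K] [ExpChar K 2] [PerfectRing K 2] (k e : ℕ) (b : ℕ → K) : K :=
  ∑ i ∈ Finset.range (e + 1), ∑ j ∈ Finset.Ioo i (e + 1), rt K (k * i) (b i) * rt K (k * j) (b j)

/-- `α_F(t) = γ_F + F^*(t)²`. -/
def alphaF [Field K] [ExpChar K 2] [PerfectRing K 2] (k e : ℕ) (b : ℕ → K) (t : K) : K :=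
  gammaF k e b + adj k e b t ^ 2

/-- `R_{F,t}(x) = R_F(x) + α_F(t) x`. -/
def RFt [Field K] [ExpChar K 2] [PerfectRing K 2] (k e : ℕ) (b : ℕ → K) (t x : K) : K :=
  RF k e b x + alphaF k e b t * x

/-- The number of affine points of the van der Geer–van der Vlugt curve
`y^p - y = x R(x)` with coordinates in `K`. -/
def Ncount (K : Type*) [Field K] (p : ℕ) (R : K → K) : ℕ :=
  Nat.card {z : K × K // z.2 ^ p - z.2 = z.1 * R z.1}

/-- The adjoint `F^*` of `F(x) = ∑_{i=0}^{e} b_i x^{p^i}`, with coefficients `b_i ∈ K`,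
viewed as a function on the algebraic closure `𝔽` of `K`. -/
def adjBar [Field K] [CharP K 2] (k e : ℕ) (b : ℕ → K) (x : AlgebraicClosure K) : AlgebraicClosure K :=
  adj k e (fun i => algebraMap K (AlgebraicClosure K) (b i)) x

/-- `F(x) = ∑_{i=0}^{e} b_i x^{p^i}`, with coefficients `b_i ∈ K`, viewed as a function on
the algebraic closure `𝔽` of `K` (with `p = 2^k`). -/
def LpolyBar [Field K] [CharP K 2] (k e : ℕ) (b : ℕ → K) (x : AlgebraicClosure K) : AlgebraicClosure K :=
  Lpoly (2 ^ k) e (fun i => algebraMap K (AlgebraicClosure K) (b i)) x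


section RtLemmas

variable {L : Type*} [Field L] [ExpChar L 2] [PerfectRing L 2]

theorem rt_succ (j : ℕ) (x : L) :
    rt L (j+1) x = rt L j ((frobeniusEquiv L 2).symm x) := by
  simp [rt, Function.iterate_succ_apply]

theorem rt_pow (j : ℕ) (x : L) : rt L j x ^ 2 ^ j = x := by
  induction j generalizing x with
  | zero => simp [rt]
  | succ j ih =>
    rw [rt_succ, pow_succ, pow_mul, ih, ← frobeniusEquiv_def]
    exact (frobeniusEquiv L 2).apply_symm_apply x

theorem pow_char_inj {a b : L} (j : ℕ) (h : a ^ 2 ^ j = b ^ 2 ^ j) : a = b := by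
  apply (bijective_iterateFrobenius L 2 j).injective
  rwa [iterateFrobenius_def, iterateFrobenius_def]

theorem rt_unique (j : ℕ) {x y : L} (h : y ^ 2 ^ j = x) : rt L j x = y :=
  pow_char_inj j (by rw [rt_pow, h])

theorem rt_add (j : ℕ) (x y : L) : rt L j (x + y) = rt L j x + rt L j y :=
  rt_unique j (by rw [add_pow_expChar_pow, rt_pow, rt_pow])

theorem rt_mul (j : ℕ) (x y : L) : rt L j (x * y) = rt L j x * rt L j y :=
  rt_unique j (by rw [mul_pow, rt_pow, rt_pow])

theorem rt_zero (j : ℕ) : rt L j (0 : L) = 0 :=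
  rt_unique j (by rw [zero_pow (by positivity)])

theorem rt_mul_pow (j : ℕ) (x y : L) : rt L j (x * y ^ 2 ^ j) = rt L j x * y :=
  rt_unique j (by rw [mul_pow, rt_pow])

theorem rt_add_iter (a b : ℕ) (x : L) : rt L (a + b) x = rt L a (rt L b x) := by
  simp [rt, Function.iterate_add_apply]

theorem rt_map {L' : Type*} [Field L'] [ExpChar L' 2] [PerfectRing L' 2]
    (g : L →+* L') (j : ℕ) (x : L) : g (rt L j x) = rt L' j (g x) :=
  (rt_unique j (by rw [← map_pow, rt_pow])).symm

end RtLemmas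

section PsiLemmas

variable {K : Type*} [Field K] [Fintype K] [CharP K 2]

theorem tr2_add (n : ℕ) (x y : K) : tr2 n (x + y) = tr2 n x + tr2 n y := by
  unfold tr2
  rw [← Finset.sum_add_distrib]
  exact Finset.sum_congr rfl fun i _ => add_pow_expChar_pow ..

theorem tr2_zero (n : ℕ) : tr2 n (0 : K) = 0 := by
  unfold tr2
  exact Finset.sum_eq_zero fun i _ => zero_pow (by positivity)

theorem tr2_frob (n : ℕ) (hcard : Fintype.card K = 2 ^ n) (x : K) :
    tr2 n (x ^ 2) = tr2 n x := by
  have h1 : ∀ i : ℕ, (x ^ 2) ^ 2 ^ i = x ^ 2 ^ (i + 1) := by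
    intro i; rw [← pow_mul, ← pow_succ']
  have key : tr2 n (x ^ 2) + x = tr2 n x + x ^ 2 ^ n := by
    unfold tr2
    calc (∑ i ∈ Finset.range n, (x ^ 2) ^ 2 ^ i) + x
        = (∑ i ∈ Finset.range n, x ^ 2 ^ (i + 1)) + x ^ 2 ^ 0 := by
          simp only [h1]; norm_num
      _ = ∑ i ∈ Finset.range (n + 1), x ^ 2 ^ i := (Finset.sum_range_succ' (fun i => x ^ 2 ^ i) n).symm
      _ = (∑ i ∈ Finset.range n, x ^ 2 ^ i) + x ^ 2 ^ n := Finset.sum_range_succ (fun i => x ^ 2 ^ i) n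
  have hx : x ^ 2 ^ n = x := by rw [← hcard, FiniteField.pow_card]
  rw [hx] at key
  exact add_right_cancel key

theorem tr2_sq (n : ℕ) (hcard : Fintype.card K = 2 ^ n) (x : K) :
    tr2 n x ^ 2 = tr2 n x := by
  have : tr2 n x ^ 2 = tr2 n (x ^ 2) := by
    unfold tr2
    rw [sum_pow_char]
    exact Finset.sum_congr rfl fun i _ => by
      rw [← pow_mul, ← pow_mul, mul_comm (2 ^ i) 2]
  rw [this, tr2_frob n hcard]

theorem tr2_zero_or_one (n : ℕ) (hcard : Fintype.card K = 2 ^ n) (x : K) :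
    tr2 n x = 0 ∨ tr2 n x = 1 := by
  have h := tr2_sq n hcard x
  have : tr2 n x * (tr2 n x - 1) = 0 := by ring_nf; linear_combination h
  rcases mul_eq_zero.1 this with h' | h'
  · exact Or.inl h'
  · exact Or.inr (by linear_combination h')

/-- The real-valued additive character `x ↦ (-1)^{Tr_{q/2}(x)}`. -/
def psiR (n : ℕ) (x : K) : ℝ := if tr2 n x = 0 then 1 else -1

theorem psiR_zero (n : ℕ) : psiR n (0 : K) = 1 := by simp [psiR, tr2_zero]

theorem psiR_add (n : ℕ) (hcard : Fintype.card K = 2 ^ n) (x y : K) :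
    psiR n (x + y) = psiR n x * psiR n y := by
  unfold psiR
  rw [tr2_add]
  have h11 : (1 : K) + 1 = 0 := CharTwo.add_self_eq_zero 1
  rcases tr2_zero_or_one n hcard x with hx | hx <;>
    rcases tr2_zero_or_one n hcard y with hy | hy <;>
      simp [hx, hy, h11, one_ne_zero (α := K)]

theorem psiR_frob (n : ℕ) (hcard : Fintype.card K = 2 ^ n) (x : K) :
    psiR n (x ^ 2) = psiR n x := by
  unfold psiR; rw [tr2_frob n hcard]

theorem psiR_one_or (n : ℕ) (x : K) : psiR n x = 1 ∨ psiR n x = -1 := by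
  unfold psiR; split <;> simp

theorem psiR_le_one (n : ℕ) (x : K) : psiR n x ≤ 1 := by
  rcases psiR_one_or n x with h | h <;> rw [h] <;> norm_num

theorem psiR_mul_self (n : ℕ) (x : K) : psiR n x * psiR n x = 1 := by
  rcases psiR_one_or n x with h | h <;> rw [h] <;> norm_num

theorem psiR_rt (n : ℕ) (hcard : Fintype.card K = 2 ^ n) (j : ℕ) (x : K) :
    psiR n (rt K j x) = psiR n x := by
  induction j generalizing x with
  | zero => simp [rt]
  | succ j ih =>
    rw [rt_succ]
    have h2 : ((frobeniusEquiv K 2).symm x) ^ 2 = x := by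
      rw [← frobeniusEquiv_def]; exact (frobeniusEquiv K 2).apply_symm_apply x
    rw [ih, ← psiR_frob n hcard, h2]

theorem psiR_sum (n : ℕ) (hcard : Fintype.card K = 2 ^ n) {ι : Type*} (s : Finset ι)
    (g : ι → K) : psiR n (∑ i ∈ s, g i) = ∏ i ∈ s, psiR n (g i) := by
  induction s using Finset.induction_on with
  | empty => simp [psiR_zero]
  | insert _ _ h ih => rw [Finset.sum_insert h, Finset.prod_insert h, psiR_add n hcard, ih]

end PsiLemmas

section SumPsi

variable {K : Type*} [Field K] [Fintype K] [CharP K 2]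

theorem exists_tr2_ne_zero (n : ℕ) (hn : 1 ≤ n) (hcard : Fintype.card K = 2 ^ n) :
    ∃ w : K, tr2 n w ≠ 0 := by
  by_contra h
  push_neg at h
  set f : Polynomial K := ∑ i ∈ Finset.range n, Polynomial.X ^ 2 ^ i with hf
  have heval : ∀ x : K, f.eval x = tr2 n x := by
    intro x; simp [hf, tr2, Polynomial.eval_finset_sum]
  have hc : f.coeff (2 ^ (n - 1)) = 1 := by
    rw [hf, Polynomial.finset_sum_coeff]
    have hterm : ∀ i ∈ Finset.range n,
        (Polynomial.X (R := K) ^ 2 ^ i).coeff (2 ^ (n - 1))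
          = if n - 1 = i then 1 else 0 := by
      intro i _
      rw [Polynomial.coeff_X_pow]
      by_cases hie : n - 1 = i
      · rw [if_pos (by rw [hie]), if_pos hie]
      · rw [if_neg (fun hh => hie (Nat.pow_right_injective (le_refl 2) hh)), if_neg hie]
    rw [Finset.sum_congr rfl hterm, Finset.sum_ite_eq]
    simp [Nat.sub_lt_of_pos_le one_pos hn]
  have hfne : f ≠ 0 := fun h0 => by simp [h0] at hc
  have hdeg : f.natDegree ≤ 2 ^ (n - 1) := by
    refine Polynomial.natDegree_sum_le_of_forall_le _ _ fun i hi => ?_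
    rw [Polynomial.natDegree_X_pow]
    exact Nat.pow_le_pow_right two_pos (Nat.le_sub_one_of_lt (Finset.mem_range.1 hi))
  refine hfne (Polynomial.eq_zero_of_natDegree_lt_card_of_eval_eq_zero f
    Function.injective_id (fun x => by rw [heval]; exact h x) ?_)
  calc f.natDegree ≤ 2 ^ (n - 1) := hdeg
    _ < 2 ^ n := Nat.pow_lt_pow_right one_lt_two (Nat.sub_lt_of_pos_le one_pos hn)
    _ = Fintype.card K := hcard.symm

theorem sum_psiR_mul (n : ℕ) (hn : 1 ≤ n) (hcard : Fintype.card K = 2 ^ n) (b : K) :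
    ∑ x : K, psiR n (b * x) = if b = 0 then ((2 : ℝ) ^ n) else 0 := by
  split_ifs with hb
  · subst hb
    simp only [zero_mul, psiR_zero]
    rw [Finset.sum_const, Finset.card_univ, hcard]
    push_cast; ring
  · obtain ⟨w, hw⟩ := exists_tr2_ne_zero n hn hcard
    have hz : psiR n (b * (b⁻¹ * w)) = -1 := by
      rw [show b * (b⁻¹ * w) = w by field_simp]
      unfold psiR; rw [if_neg hw]
    have hshift : ∑ x : K, psiR n (b * (x + b⁻¹ * w)) = ∑ x : K, psiR n (b * x) :=
      Fintype.sum_equiv (Equiv.addRight (b⁻¹ * w)) _ _ fun x => rfl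
    have : ∑ x : K, psiR n (b * x) = - ∑ x : K, psiR n (b * x) := by
      calc ∑ x : K, psiR n (b * x) = ∑ x : K, psiR n (b * (x + b⁻¹ * w)) := hshift.symm
        _ = ∑ x : K, psiR n (b * x) * psiR n (b * (b⁻¹ * w)) := by
            refine Finset.sum_congr rfl fun x _ => ?_
            rw [mul_add, psiR_add n hcard]
        _ = - ∑ x : K, psiR n (b * x) := by rw [hz]; simp [Finset.sum_neg_distrib]
    linarith

end SumPsi

section MainCount

variable {K : Type*} [Field K] [Fintype K] [CharP K 2]

set_option maxHeartbeats 1000000 in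
theorem Wcard_ge (k m e : ℕ) (hk : 1 ≤ k) (hm : 1 ≤ m) (he : 1 ≤ e)
    (hcard : Fintype.card K = 2 ^ (k * m)) (c : ℕ → K) (a : K)
    (ha : ((Ncount K (2 ^ k) (fun x => LpolyIcc (2 ^ k) e c x + a * x) : ℤ) - 2 ^ (k * m)) ^ 2
        = (2 ^ k - 1) ^ 2 * (2 ^ k) ^ (2 * e) * 2 ^ (k * m)) :
    (2 ^ k) ^ (2 * e) ≤ (Finset.univ.filter
      fun h : K => LpolyIcc (2 ^ k) e c h + adjIcc k e c h = 0).card := by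
  classical
  set n := k * m with hn_def
  have hn : 1 ≤ n := le_trans (by norm_num) (Nat.mul_le_mul hk hm)
  set p : ℕ := 2 ^ k with hp_def
  have hp2 : 2 ≤ p := by
    calc 2 = 2 ^ 1 := (pow_one 2).symm
    _ ≤ 2 ^ k := Nat.pow_le_pow_right (by norm_num) hk
  set Rc : K → K := fun x => LpolyIcc p e c x with hRc_def
  set f : K → K := fun x => x * (Rc x + a * x) with hf_def
  set Tf : K → K := fun h => LpolyIcc p e c h + adjIcc k e c h with hTf_def
  set W : Finset K := Finset.univ.filter (fun h => Tf h = 0) with hW_def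
  set N : ℕ := Ncount K (2 ^ k) (fun x => LpolyIcc (2 ^ k) e c x + a * x) with hN_def
  set S : K → ℝ := fun t => ∑ x : K, psiR n (t * f x) with hS_def
  set Pset : Finset K := Finset.univ.filter (fun t => rt K k t = t) with hPset_def
  have hq0 : ((2 : ℝ) ^ n) ≠ 0 := by positivity
  have hcardR : (Fintype.card K : ℝ) = 2 ^ n := by rw [hcard]; push_cast; ring
  -- R is additive
  have hpow : ∀ i : ℕ, p ^ i = 2 ^ (k * i) := fun i => by rw [hp_def, pow_mul]
  have hRc_add : ∀ x h : K, Rc (x + h) = Rc x + Rc h := by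
    intro x h
    simp only [hRc_def, LpolyIcc]
    rw [← Finset.sum_add_distrib]
    refine Finset.sum_congr rfl fun i _ => ?_
    rw [hpow i, add_pow_expChar_pow, mul_add]
  -- expansion of f
  have hf_add : ∀ x h : K, f (x + h) = f x + f h + (x * Rc h + h * Rc x) := by
    intro x h
    have h2 : (2 : K) = 0 := CharTwo.two_eq_zero
    simp only [hf_def]
    rw [hRc_add x h]
    linear_combination (a * x * h) * h2
  -- N as a double sum
  have hNsum : (N : ℝ) = ∑ x : K, ∑ y : K, (if y ^ p - y = f x then (1 : ℝ) else 0) := by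
    rw [hN_def, Ncount, Nat.card_eq_fintype_card, Fintype.card_subtype, Finset.card_filter]
    push_cast
    rw [Fintype.sum_prod_type]
  -- main identity
  have hiff : ∀ x y : K, (y ^ p - y = f x) ↔ (y ^ p + y + f x = 0) := by
    intro x y
    rw [CharTwo.sub_eq_add]
    constructor
    · intro h; rw [h]; exact CharTwo.add_self_eq_zero _
    · intro h
      have h' := CharTwo.add_eq_iff_eq_add.mp h
      rwa [zero_add] at h'
  have step1 : (2 : ℝ) ^ n * (N : ℝ)
      = ∑ x : K, ∑ y : K, ∑ t : K, psiR n (t * (y ^ p + y + f x)) := by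
    rw [hNsum, Finset.mul_sum]
    refine Finset.sum_congr rfl fun x _ => ?_
    rw [Finset.mul_sum]
    refine Finset.sum_congr rfl fun y _ => ?_
    have hcomm : ∑ t : K, psiR n (t * (y ^ p + y + f x))
        = if (y ^ p + y + f x) = 0 then (2 : ℝ) ^ n else 0 := by
      rw [← sum_psiR_mul n hn hcard]
      exact Finset.sum_congr rfl fun t _ => by rw [mul_comm]
    rw [hcomm]
    by_cases hc : y ^ p - y = f x
    · rw [if_pos ((hiff x y).1 hc), if_pos hc]; ring
    · rw [if_neg (fun hh => hc ((hiff x y).2 hh)), if_neg hc]; ring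
  have hApsi : ∀ t y : K, psiR n (t * (y ^ p + y)) = psiR n ((rt K k t + t) * y) := by
    intro t y
    rw [mul_add, psiR_add n hcard, add_mul, psiR_add n hcard]
    congr 1
    have : psiR n (rt K k t * y) = psiR n (t * y ^ p) := by
      rw [← rt_mul_pow k t y, psiR_rt n hcard, hp_def]
    rw [this]
  have step2 : ∑ x : K, ∑ y : K, ∑ t : K, psiR n (t * (y ^ p + y + f x))
      = (2 : ℝ) ^ n * ∑ t ∈ Pset, S t := by
    have hsplit : ∀ x y t : K, psiR n (t * (y ^ p + y + f x))
        = psiR n (t * (y ^ p + y)) * psiR n (t * f x) := fun x y t => by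
      rw [mul_add, psiR_add n hcard]
    calc ∑ x : K, ∑ y : K, ∑ t : K, psiR n (t * (y ^ p + y + f x))
        = ∑ t : K, ∑ x : K, ∑ y : K, psiR n (t * (y ^ p + y)) * psiR n (t * f x) := by
          simp_rw [hsplit]
          rw [show (∑ x : K, ∑ y : K, ∑ t : K,
                psiR n (t * (y ^ p + y)) * psiR n (t * f x))
              = ∑ x : K, ∑ t : K, ∑ y : K,
                psiR n (t * (y ^ p + y)) * psiR n (t * f x) from
            Finset.sum_congr rfl fun x _ => Finset.sum_comm]
          exact Finset.sum_comm
      _ = ∑ t : K, (if rt K k t + t = 0 then (2:ℝ) ^ n else 0) * S t := by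
          refine Finset.sum_congr rfl fun t _ => ?_
          calc ∑ x : K, ∑ y : K, psiR n (t * (y ^ p + y)) * psiR n (t * f x)
              = ∑ x : K, (∑ y : K, psiR n (t * (y ^ p + y))) * psiR n (t * f x) :=
                Finset.sum_congr rfl fun x _ => (Finset.sum_mul _ _ _).symm
            _ = (∑ y : K, psiR n (t * (y ^ p + y))) * S t := by
                rw [← Finset.mul_sum]
            _ = (if rt K k t + t = 0 then (2:ℝ) ^ n else 0) * S t := by
                congr 1
                rw [Finset.sum_congr rfl fun y _ => hApsi t y]
                exact sum_psiR_mul n hn hcard _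
      _ = ∑ t : K, (if rt K k t = t then (2:ℝ) ^ n * S t else 0) := by
          refine Finset.sum_congr rfl fun t _ => ?_
          by_cases hc : rt K k t = t
          · rw [if_pos hc, if_pos (by rw [hc]; exact CharTwo.add_self_eq_zero t)]
          · rw [if_neg hc, if_neg (fun hh => hc (by
              have h' := CharTwo.add_eq_iff_eq_add.mp hh
              rwa [zero_add] at h')), zero_mul]
      _ = (2 : ℝ) ^ n * ∑ t ∈ Pset, S t := by
          rw [hPset_def, Finset.mul_sum, Finset.sum_filter]
  have hNP : (N : ℝ) = ∑ t ∈ Pset, S t :=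
    mul_left_cancel₀ hq0 (step1.trans step2)
  have hS0 : S 0 = 2 ^ n := by
    rw [hS_def]
    simp only [zero_mul, psiR_zero]
    rw [Finset.sum_const, Finset.card_univ, hcard, nsmul_eq_mul]
    push_cast [hn_def]
    ring
  have h0P : (0 : K) ∈ Pset := by
    rw [hPset_def, Finset.mem_filter]
    exact ⟨Finset.mem_univ _, rt_zero k⟩
  have hNq : (N : ℝ) - 2 ^ n = ∑ t ∈ Pset.erase 0, S t := by
    rw [hNP, ← Finset.add_sum_erase _ S h0P, hS0]; ring
  have hcardP : ((Pset.erase 0).card : ℝ) ≤ (p : ℝ) - 1 := by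
    have hsub : Pset.erase 0 ⊆ (Polynomial.X ^ (p - 1) - Polynomial.C (1 : K)).roots.toFinset := by
      intro t ht
      obtain ⟨ht0, htP⟩ := Finset.mem_erase.1 ht
      have htfix : rt K k t = t := (Finset.mem_filter.1 htP).2
      have htp : t ^ p = t := by
        conv_lhs => rw [← htfix]
        rw [hp_def]
        exact rt_pow k t
      have ht1 : t ^ (p - 1) = 1 := by
        have hps : t * t ^ (p - 1) = t * 1 := by
          rw [mul_one, ← pow_succ', show p - 1 + 1 = p by omega]
          exact htp
        exact mul_left_cancel₀ ht0 hps
      rw [Multiset.mem_toFinset,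
        Polynomial.mem_roots (Polynomial.X_pow_sub_C_ne_zero (by omega) 1)]
      simp [Polynomial.IsRoot, ht1]
    have hnat : (Pset.erase 0).card ≤ p - 1 := by
      calc (Pset.erase 0).card
          ≤ (Polynomial.X ^ (p - 1) - Polynomial.C (1 : K)).roots.toFinset.card :=
            Finset.card_le_card hsub
        _ ≤ Multiset.card (Polynomial.X ^ (p - 1) - Polynomial.C (1 : K)).roots :=
            Multiset.toFinset_card_le _
        _ ≤ (Polynomial.X ^ (p - 1) - Polynomial.C (1 : K)).natDegree :=
            Polynomial.card_roots' _
        _ = p - 1 := Polynomial.natDegree_X_pow_sub_C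
    calc ((Pset.erase 0).card : ℝ) ≤ ((p - 1 : ℕ) : ℝ) := by exact_mod_cast hnat
      _ = (p : ℝ) - 1 := by
          rw [Nat.cast_sub (by omega)]; norm_num
  have hSbound : ∀ t ∈ Pset.erase 0, S t ^ 2 ≤ 2 ^ n * (W.card : ℝ) := by
    intro t ht
    obtain ⟨ht0, htP⟩ := Finset.mem_erase.1 ht
    have htfix : rt K k t = t := (Finset.mem_filter.1 htP).2
    have hrtfix : ∀ i : ℕ, rt K (k * i) t = t := by
      intro i
      induction i with
      | zero => simp [rt]
      | succ i ih => rw [Nat.mul_succ, rt_add_iter, htfix, ih]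
    have hstar : ∀ h x : K,
        psiR n (t * (h * Rc x)) = psiR n (x * (t * adjIcc k e c h)) := by
      intro h x
      have hlhs : t * (h * Rc x) = ∑ i ∈ Finset.Icc 1 e, (t * (c i * h)) * x ^ 2 ^ (k * i) := by
        simp only [hRc_def, LpolyIcc, Finset.mul_sum]
        refine Finset.sum_congr rfl fun i _ => ?_
        rw [hpow i]; ring
      have hrhs : x * (t * adjIcc k e c h)
          = ∑ i ∈ Finset.Icc 1 e, rt K (k * i) (t * (c i * h)) * x := by
        simp only [adjIcc, Finset.mul_sum]
        refine Finset.sum_congr rfl fun i _ => ?_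
        rw [rt_mul (k * i) t (c i * h), hrtfix i]; ring
      rw [hlhs, hrhs, psiR_sum n hcard, psiR_sum n hcard]
      refine Finset.prod_congr rfl fun i _ => ?_
      rw [← rt_mul_pow (k * i), psiR_rt n hcard]
    have stepA : S t ^ 2 = ∑ x : K, ∑ h : K, psiR n (t * f x) * psiR n (t * f (x + h)) := by
      rw [sq, hS_def]
      simp only []
      rw [Fintype.sum_mul_sum]
      refine Finset.sum_congr rfl fun x _ => ?_
      exact (Fintype.sum_equiv (Equiv.addLeft x) _ _ fun h => rfl).symm
    have stepB : ∀ x h : K, psiR n (t * f x) * psiR n (t * f (x + h))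
        = psiR n (t * f h) *
          (psiR n ((t * Rc h + t * adjIcc k e c h) * x)) := by
      intro x h
      rw [hf_add x h]
      rw [show t * (f x + f h + (x * Rc h + h * Rc x))
          = t * f x + (t * f h + (t * (x * Rc h) + t * (h * Rc x))) by ring]
      rw [psiR_add n hcard, psiR_add n hcard, psiR_add n hcard, ← mul_assoc,
        psiR_mul_self, one_mul, hstar h x, ← psiR_add n hcard]
      congr 2
      ring
    have stepC : S t ^ 2
        = ∑ h : K, psiR n (t * f h) * ∑ x : K, psiR n ((t * Rc h + t * adjIcc k e c h) * x) := by
      rw [stepA]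
      simp_rw [stepB]
      rw [Finset.sum_comm]
      exact Finset.sum_congr rfl fun h _ => by rw [← Finset.mul_sum]
    have stepD : ∀ h : K,
        ∑ x : K, psiR n ((t * Rc h + t * adjIcc k e c h) * x)
          = if Tf h = 0 then (2 : ℝ) ^ n else 0 := by
      intro h
      rw [sum_psiR_mul n hn hcard]
      have hfactor : t * Rc h + t * adjIcc k e c h = t * Tf h := by
        rw [hTf_def]; simp only [hRc_def]; ring
      by_cases hc : Tf h = 0
      · rw [if_pos hc, if_pos (by rw [hfactor, hc, mul_zero])]
      · rw [if_neg hc, if_neg (by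
          rw [hfactor]
          exact mul_ne_zero ht0 hc)]
    have stepE : S t ^ 2 = 2 ^ n * ∑ h ∈ W, psiR n (t * f h) := by
      rw [stepC]
      simp_rw [stepD]
      rw [hW_def, Finset.sum_filter, Finset.mul_sum]
      refine Finset.sum_congr rfl fun h _ => ?_
      by_cases hc : Tf h = 0
      · rw [if_pos hc, if_pos hc]; ring
      · rw [if_neg hc, if_neg hc]; ring
    rw [stepE]
    refine mul_le_mul_of_nonneg_left ?_ (by positivity)
    calc ∑ h ∈ W, psiR n (t * f h) ≤ ∑ _h ∈ W, (1 : ℝ) :=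
          Finset.sum_le_sum fun h _ => psiR_le_one n _
      _ = (W.card : ℝ) := by rw [Finset.sum_const, nsmul_eq_mul, mul_one]
  -- the squared bound
  have hWnn : (0 : ℝ) ≤ 2 ^ n * (W.card : ℝ) := by positivity
  have habs : |(N : ℝ) - 2 ^ n| ≤ ((p : ℝ) - 1) * Real.sqrt (2 ^ n * W.card) := by
    rw [hNq]
    calc |∑ t ∈ Pset.erase 0, S t| ≤ ∑ t ∈ Pset.erase 0, |S t| :=
          Finset.abs_sum_le_sum_abs _ _
      _ ≤ ∑ _t ∈ Pset.erase 0, Real.sqrt (2 ^ n * W.card) := by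
          refine Finset.sum_le_sum fun t ht => ?_
          rw [← Real.sqrt_sq_eq_abs]
          exact Real.sqrt_le_sqrt (hSbound t ht)
      _ = ((Pset.erase 0).card : ℝ) * Real.sqrt (2 ^ n * W.card) := by
          rw [Finset.sum_const, nsmul_eq_mul]
      _ ≤ ((p : ℝ) - 1) * Real.sqrt (2 ^ n * W.card) := by
          exact mul_le_mul_of_nonneg_right hcardP (Real.sqrt_nonneg _)
  have hsq : ((N : ℝ) - 2 ^ n) ^ 2 ≤ ((p : ℝ) - 1) ^ 2 * (2 ^ n * (W.card : ℝ)) := by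
    have h1 : ((N : ℝ) - 2 ^ n) ^ 2 ≤ (((p : ℝ) - 1) * Real.sqrt (2 ^ n * W.card)) ^ 2 := by
      rw [← sq_abs]
      exact pow_le_pow_left₀ (abs_nonneg _) habs 2
    rwa [mul_pow, Real.sq_sqrt hWnn] at h1
  have haR : ((N : ℝ) - 2 ^ n) ^ 2 = ((p : ℝ) - 1) ^ 2 * (p : ℝ) ^ (2 * e) * 2 ^ n := by
    rw [hp_def]
    push_cast
    exact_mod_cast ha
  have hp1 : (0 : ℝ) < ((p : ℝ) - 1) ^ 2 := by
    have : (2 : ℝ) ≤ (p : ℝ) := by exact_mod_cast hp2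
    nlinarith
  have hfinal : ((p : ℕ) ^ (2 * e) : ℝ) ≤ (W.card : ℝ) := by
    rw [haR] at hsq
    have h2 : (p : ℝ) ^ (2 * e) * 2 ^ n ≤ 2 ^ n * (W.card : ℝ) := by
      nlinarith [hp1, hsq]
    have h3 : (0 : ℝ) < 2 ^ n := by positivity
    push_cast
    nlinarith
  exact_mod_cast hfinal

end MainCount

/-- If some twist `y^p - y = x(R(x) + ax)` is `𝔽_q`-extremal, then
`V = ker(R + R^*) ⊆ 𝔽_q`. -/
theorem statement4 {K : Type*} [Field K] [Fintype K] [CharP K 2]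
    (k m e : ℕ) (hk : 1 ≤ k) (hm : 1 ≤ m) (he : 1 ≤ e)
    (hcard : Fintype.card K = 2 ^ (k * m))
    (c : ℕ → K) (hce : c e ≠ 0)
    (hex : ∃ a : K,
      ((Ncount K (2 ^ k) (fun x => LpolyIcc (2 ^ k) e c x + a * x) : ℤ) - 2 ^ (k * m)) ^ 2
        = (2 ^ k - 1) ^ 2 * (2 ^ k) ^ (2 * e) * 2 ^ (k * m)) :
    ∀ u : AlgebraicClosure K,
      LpolyIcc (2 ^ k) e (fun i => algebraMap K (AlgebraicClosure K) (c i)) u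
          + adjIcc k e (fun i => algebraMap K (AlgebraicClosure K) (c i)) u = 0 →
        u ∈ Set.range (algebraMap K (AlgebraicClosure K)) := by
  classical
  obtain ⟨a, ha⟩ := hex
  have hW := Wcard_ge k m e hk hm he hcard c a ha
  set W : Finset K :=
    Finset.univ.filter (fun h : K => LpolyIcc (2 ^ k) e c h + adjIcc k e c h = 0) with hW_def
  set F := AlgebraicClosure K with hF_def
  set cb : ℕ → F := fun i => algebraMap K F (c i) with hcb_def
  intro u hu
  have hφinj : Function.Injective (algebraMap K F) := (algebraMap K F).injective
  set D : ℕ := 2 ^ (k * (2 * e)) with hD_def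
  set PP : Polynomial F := ∑ i ∈ Finset.Icc 1 e,
      (Polynomial.C (cb i ^ 2 ^ (k * e)) * Polynomial.X ^ 2 ^ (k * (e + i))
        + Polynomial.C (cb i ^ 2 ^ (k * (e - i))) * Polynomial.X ^ 2 ^ (k * (e - i)))
    with hPP_def
  -- evaluation formula
  have hEval : ∀ v : F, PP.eval v
      = (LpolyIcc (2 ^ k) e cb v + adjIcc k e cb v) ^ 2 ^ (k * e) := by
    intro v
    have hF : ∀ z : F, z ^ 2 ^ (k * e) = iterateFrobenius F 2 (k * e) z :=
      fun z => (iterateFrobenius_def 2 (k * e) z).symm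
    rw [hF, map_add, LpolyIcc, adjIcc, map_sum, map_sum, hPP_def,
      Polynomial.eval_finset_sum, ← Finset.sum_add_distrib]
    refine Finset.sum_congr rfl fun i hi => ?_
    obtain ⟨hi1, hi2⟩ := Finset.mem_Icc.1 hi
    have hsplit : k * e = k * i + k * (e - i) := by
      rw [← Nat.mul_add, Nat.add_sub_cancel' hi2]
    rw [Polynomial.eval_add]
    congr 1
    · -- first term
      rw [← hF, Polynomial.eval_mul, Polynomial.eval_C, Polynomial.eval_pow,
        Polynomial.eval_X, mul_pow, ← pow_mul, ← pow_mul, ← pow_add]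
      congr 2
      ring
    · -- second term
      rw [← hF, Polynomial.eval_mul, Polynomial.eval_C, Polynomial.eval_pow,
        Polynomial.eval_X]
      rw [hsplit, pow_add, pow_mul (rt F (k * i) (cb i * v)) (2 ^ (k * i)),
        rt_pow, mul_pow]
  -- degree bound
  have hdeg : PP.natDegree ≤ D := by
    rw [hPP_def]
    refine Polynomial.natDegree_sum_le_of_forall_le _ _ fun i hi => ?_
    obtain ⟨hi1, hi2⟩ := Finset.mem_Icc.1 hi
    refine le_trans (Polynomial.natDegree_add_le _ _) (max_le ?_ ?_) <;>
      refine le_trans (Polynomial.natDegree_C_mul_le _ _) ?_ <;>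
        rw [Polynomial.natDegree_X_pow, hD_def] <;>
          exact Nat.pow_le_pow_right (by norm_num) (Nat.mul_le_mul le_rfl (by omega))
  -- leading coefficient
  have hcoeff : PP.coeff D = cb e ^ 2 ^ (k * e) := by
    rw [hPP_def, Polynomial.finset_sum_coeff]
    have hterm : ∀ i ∈ Finset.Icc 1 e,
        (Polynomial.C (cb i ^ 2 ^ (k * e)) * Polynomial.X ^ 2 ^ (k * (e + i))
          + Polynomial.C (cb i ^ 2 ^ (k * (e - i))) * Polynomial.X ^ 2 ^ (k * (e - i))).coeff D
        = if e = i then cb e ^ 2 ^ (k * e) else 0 := by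
      intro i hi
      obtain ⟨hi1, hi2⟩ := Finset.mem_Icc.1 hi
      rw [Polynomial.coeff_add, Polynomial.coeff_C_mul, Polynomial.coeff_C_mul,
        Polynomial.coeff_X_pow, Polynomial.coeff_X_pow]
      have hne : ¬ (D = 2 ^ (k * (e - i))) := by
        rw [hD_def]
        intro hh
        have h1 := Nat.pow_right_injective (le_refl 2) hh
        have hkpos : 0 < k := hk
        have h2 := Nat.eq_of_mul_eq_mul_left hkpos h1
        omega
      rw [if_neg hne, mul_zero, add_zero]
      by_cases hie : e = i
      · subst hie
        rw [if_pos (by rw [hD_def]; congr 1; ring), if_pos rfl, mul_one]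
      · rw [if_neg (fun hh => hie (by
          have h1 := Nat.pow_right_injective (le_refl 2) (hD_def ▸ hh)
          have hkpos : 0 < k := hk
          have h2 := Nat.eq_of_mul_eq_mul_left hkpos h1
          omega)), mul_zero, if_neg hie]
    rw [Finset.sum_congr rfl hterm, Finset.sum_ite_eq]
    rw [if_pos (Finset.mem_Icc.2 ⟨he, le_refl e⟩)]
  have hcbne : cb e ≠ 0 := fun h0 => hce (hφinj (by rwa [map_zero]))
  have hPne : PP ≠ 0 := fun h0 => by
    rw [h0, Polynomial.coeff_zero] at hcoeff
    exact pow_ne_zero _ hcbne hcoeff.symm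
  -- image of W is contained in the roots
  have hWroots : W.image (algebraMap K F) ⊆ PP.roots.toFinset := by
    intro v hv
    obtain ⟨w, hw, rfl⟩ := Finset.mem_image.1 hv
    have hTw : LpolyIcc (2 ^ k) e c w + adjIcc k e c w = 0 := (Finset.mem_filter.1 hw).2
    have hmap : LpolyIcc (2 ^ k) e cb (algebraMap K F w) + adjIcc k e cb (algebraMap K F w)
        = algebraMap K F (LpolyIcc (2 ^ k) e c w + adjIcc k e c w) := by
      rw [map_add]
      congr 1
      · rw [LpolyIcc, LpolyIcc, map_sum]
        exact Finset.sum_congr rfl fun i _ => by rw [map_mul, map_pow, hcb_def]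
      · rw [adjIcc, adjIcc, map_sum]
        refine Finset.sum_congr rfl fun i _ => ?_
        rw [rt_map (algebraMap K F), map_mul, hcb_def]
    rw [Multiset.mem_toFinset, Polynomial.mem_roots hPne]
    show PP.eval (algebraMap K F w) = 0
    rw [hEval, hmap, hTw, map_zero, zero_pow (by positivity)]
  have hcards : PP.roots.toFinset.card ≤ (W.image (algebraMap K F)).card := by
    calc PP.roots.toFinset.card ≤ Multiset.card PP.roots := Multiset.toFinset_card_le _
      _ ≤ PP.natDegree := Polynomial.card_roots' _
      _ ≤ D := hdeg
      _ ≤ W.card := by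
          rw [hD_def]
          calc 2 ^ (k * (2 * e)) = (2 ^ k) ^ (2 * e) := by rw [pow_mul]
            _ ≤ W.card := hW
      _ = (W.image (algebraMap K F)).card :=
          (Finset.card_image_of_injective _ hφinj).symm
  have heq : W.image (algebraMap K F) = PP.roots.toFinset :=
    Finset.eq_of_subset_of_card_le hWroots hcards
  -- u is a root of PP
  have hu2 : u ∈ PP.roots.toFinset := by
    rw [Multiset.mem_toFinset, Polynomial.mem_roots hPne]
    show PP.eval u = 0
    rw [hEval, hu, zero_pow (by positivity)]
  rw [← heq] at hu2
  obtain ⟨w, _, hw⟩ := Finset.mem_image.1 hu2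
  exact ⟨w, hw⟩

end
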